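/- Let σ be a consistent two-dimensional domino-complete substitution on a finite alphabet A. Then there exist vectors α, β ∈ ℤ² and, for every t ∈ A, a vector v_t ∈ ℤ², such that every C_σ-path γ from a cell [(0,0),t] to a cell [(x,y),t'] satisfies ω_σ(γ) = xα + yβ − v_t + v_{t'}. -/

import Mathlib

open scoped Classical

/-- A combinatorial substitution on alphabet `A` with vectors in `V`:
a base rule sending each letter to a pattern, together with a deterministic
finite set of concatenation rules.  `rule t t' u = some v` encodes the
concatenation rule `(t, t', u) ↦ v`. -/
structure Subst (A : Type*) (V : Type*) [AddCommGroup V] where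
  /-- the base rule -/
  base : A → Finset (V × A)
  /-- the image of a letter is a pattern: its cells have distinct vectors -/
  basePat : ∀ t : A, ∀ c ∈ base t, ∀ c' ∈ base t, c.1 = c'.1 → c = c'
  /-- the concatenation rules, as a partial function -/
  rule : A → A → V → Option V
  /-- there are finitely many concatenation rules -/
  finiteRules : {u : V | ∃ t t', rule t t' u ≠ none}.Finite
  /-- determinism: no two rules with left-hand sides `(t,t',u)` and `(t,t',-u)` -/
  det : ∀ t t' u, (rule t t' u).isSome → (rule t t' (-u)).isSome → u = -u

/-- A pattern is a finite set of cells with pairwise distinct vectors. -/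
def IsPattern {V A : Type*} (P : Finset (V × A)) : Prop :=
  ∀ c ∈ P, ∀ c' ∈ P, c.1 = c'.1 → c = c'

namespace Subst

variable {A V : Type*} [AddCommGroup V]

/-- `σ_rule(c, c')`: the relative position of the images of the two cells
`c`, `c'`, when some concatenation rule applies to them. -/
def ruleVec (σ : Subst A V) (c c' : V × A) : Option V :=
  match σ.rule c.2 c'.2 (c'.1 - c.1) with
  | some v => some v
  | none => (σ.rule c'.2 c.2 (c.1 - c'.1)).map (fun v => -v)

/-- The image vector `ω_σ(γ)` of a path `γ`. -/
def omega (σ : Subst A V) (γ : List (V × A)) : V :=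
  ((γ.zip γ.tail).map (fun p => (σ.ruleVec p.1 p.2).getD 0)).sum

/-- A `C_σ`-path: a nonempty sequence of cells in which any two consecutive
cells form a translated copy of a starting pattern of `σ`, and any two cells
with the same vector are equal. -/
def IsPath (σ : Subst A V) (γ : List (V × A)) : Prop :=
  γ ≠ [] ∧ γ.Chain' (fun c c' => (σ.ruleVec c c').isSome) ∧
    ∀ c ∈ γ, ∀ c' ∈ γ, c.1 = c'.1 → c = c'

/-- A `C_σ`-path of the pattern `P`. -/
def IsPathOf (σ : Subst A V) (P : Finset (V × A)) (γ : List (V × A)) : Prop :=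
  σ.IsPath γ ∧ ∀ c ∈ γ, c ∈ P

/-- A `C_σ`-loop of the pattern `P`. -/
def IsLoopOf (σ : Subst A V) (P : Finset (V × A)) (γ : List (V × A)) : Prop :=
  σ.IsPathOf P γ ∧ γ.head? = γ.getLast?

/-- `P` is `C_σ`-covered: any two of its cells are joined by a `C_σ`-path of `P`. -/
def Covered (σ : Subst A V) (P : Finset (V × A)) : Prop :=
  ∀ c ∈ P, ∀ c' ∈ P,
    ∃ γ, σ.IsPathOf P γ ∧ γ.head? = some c ∧ γ.getLast? = some c'

/-- `σ` is consistent on `P`: any two `C_σ`-paths of `P` with the same first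
and last cells have the same image vector. -/
def ConsistentOn (σ : Subst A V) (P : Finset (V × A)) : Prop :=
  ∀ γ γ' : List (V × A), σ.IsPathOf P γ → σ.IsPathOf P γ' →
    γ.head? = γ'.head? → γ.getLast? = γ'.getLast? → σ.omega γ = σ.omega γ'

/-- `σ` is consistent: it is consistent on every `C_σ`-covered pattern. -/
def Consistent (σ : Subst A V) : Prop :=
  ∀ P : Finset (V × A), IsPattern P → σ.Covered P → σ.ConsistentOn P

/-- The support of the image of a letter. -/
noncomputable def supp (σ : Subst A V) (t : A) : Finset V :=
  (σ.base t).image Prod.fst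

/-- `σ` is non-overlapping on `P`: the images of two distinct cells of `P`
joined by a `C_σ`-path of `P` have disjoint supports. -/
def NonOverlappingOn (σ : Subst A V) (P : Finset (V × A)) : Prop :=
  ∀ c ∈ P, ∀ c' ∈ P, c ≠ c' → ∀ γ, σ.IsPathOf P γ →
    γ.head? = some c → γ.getLast? = some c' →
    ∀ b ∈ σ.supp c'.2, σ.omega γ + b ∉ σ.supp c.2

/-- `σ` is non-overlapping: it is non-overlapping on every `C_σ`-covered pattern. -/
def NonOverlapping (σ : Subst A V) : Prop :=
  ∀ P : Finset (V × A), IsPattern P → σ.Covered P → σ.NonOverlappingOn P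

end Subst

/-- A domino: a two-cell two-dimensional pattern whose vectors differ by
`(1,0)`, `(-1,0)`, `(0,1)` or `(0,-1)`. -/
def IsDomino {A : Type*} (P : Finset ((ℤ × ℤ) × A)) : Prop :=
  ∃ (v u : ℤ × ℤ) (t t' : A), (u = (1, 0) ∨ u = (0, 1)) ∧
    P = {(v, t), (v + u, t')}

/-- A `2 × 2` pattern: a pattern whose support is a translate of
`{0,1} × {0,1}`. -/
def IsTwoByTwo {A : Type*} (P : Finset ((ℤ × ℤ) × A)) : Prop :=
  IsPattern P ∧ ∃ w : ℤ × ℤ,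
    P.image Prod.fst = ({w, w + (1, 0), w + (0, 1), w + (1, 1)} : Finset (ℤ × ℤ))

/-- A two-dimensional substitution is domino-complete when its starting
patterns are exactly all the dominoes. -/
def Subst.DominoComplete {A : Type*} (σ : Subst A (ℤ × ℤ)) : Prop :=
  (∀ (t t' : A) (u : ℤ × ℤ), σ.rule t t' u ≠ none →
      u = (1, 0) ∨ u = (-1, 0) ∨ u = (0, 1) ∨ u = (0, -1)) ∧
  ∀ t t' : A,
    (σ.ruleVec ((0, 0), t) ((1, 0), t')).isSome ∧
    (σ.ruleVec ((0, 0), t) ((0, 1), t')).isSome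


section AuxLemmas

variable {A : Type*} {V : Type*} [AddCommGroup V]

lemma ruleVec_isSome_symm (σ : Subst A V) (c c' : V × A)
    (h : (σ.ruleVec c c').isSome) : (σ.ruleVec c' c).isSome := by
  rcases h1 : σ.rule c.2 c'.2 (c'.1 - c.1) with _ | v <;>
    rcases h2 : σ.rule c'.2 c.2 (c.1 - c'.1) with _ | w <;>
    simp [Subst.ruleVec, h1, h2] at h ⊢

lemma ruleVec_transl (σ : Subst A V) (a b : A) (p q : V) :
    σ.ruleVec (p, a) (q, b) = σ.ruleVec (0, a) (q - p, b) := by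
  simp [Subst.ruleVec, sub_zero, zero_sub, neg_sub]

lemma isPathOf_single (σ : Subst A V) {P : Finset (V × A)} {c : V × A} (h : c ∈ P) :
    σ.IsPathOf P [c] := by
  refine ⟨⟨by simp, by simp [List.Chain'], ?_⟩, by simp [h]⟩
  intro x hx y hy _
  simp only [List.mem_singleton] at hx hy
  rw [hx, hy]

lemma isPathOf_pair (σ : Subst A V) {P : Finset (V × A)} {c c' : V × A}
    (h1 : c ∈ P) (h2 : c' ∈ P) (hne : c.1 ≠ c'.1)
    (hs : (σ.ruleVec c c').isSome) : σ.IsPathOf P [c, c'] := by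
  refine ⟨⟨by simp, by simp [List.Chain', hs], ?_⟩, by simp [h1, h2]⟩
  intro x hx y hy hxy
  simp only [List.mem_cons, List.mem_singleton, List.not_mem_nil, or_false] at hx hy
  rcases hx with rfl | rfl <;> rcases hy with rfl | rfl <;>
    first | rfl | exact absurd hxy (by assumption) | exact absurd hxy.symm (by assumption)

lemma isPathOf_triple (σ : Subst A V) {P : Finset (V × A)} {c1 c2 c3 : V × A}
    (h1 : c1 ∈ P) (h2 : c2 ∈ P) (h3 : c3 ∈ P)
    (h12 : c1.1 ≠ c2.1) (h13 : c1.1 ≠ c3.1) (h23 : c2.1 ≠ c3.1)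
    (hs12 : (σ.ruleVec c1 c2).isSome) (hs23 : (σ.ruleVec c2 c3).isSome) :
    σ.IsPathOf P [c1, c2, c3] := by
  refine ⟨⟨by simp, by simp [List.Chain', hs12, hs23], ?_⟩, by simp [h1, h2, h3]⟩
  intro x hx y hy hxy
  simp only [List.mem_cons, List.mem_singleton, List.not_mem_nil, or_false] at hx hy
  rcases hx with rfl | rfl | rfl <;> rcases hy with rfl | rfl | rfl <;>
    first | rfl | exact absurd hxy (by assumption) | exact absurd hxy.symm (by assumption)

lemma ruleVec_antisymm (σ : Subst A V) (hcons : σ.Consistent)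
    {c c' : V × A} (hne : c.1 ≠ c'.1) (hs : (σ.ruleVec c c').isSome) :
    (σ.ruleVec c c').getD 0 + (σ.ruleVec c' c).getD 0 = 0 := by
  classical
  have hs' : (σ.ruleVec c' c).isSome := ruleVec_isSome_symm σ c c' hs
  set P : Finset (V × A) := {c, c'} with hP
  have hc : c ∈ P := by simp [hP]
  have hc' : c' ∈ P := by simp [hP]
  have hpat : IsPattern P := by
    intro x hx y hy hxy
    simp only [hP, Finset.mem_insert, Finset.mem_singleton] at hx hy
    rcases hx with rfl | rfl <;> rcases hy with rfl | rfl <;>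
      first | rfl | exact absurd hxy (by assumption) | exact absurd hxy.symm (by assumption)
  have hcov : σ.Covered P := by
    intro x hx y hy
    simp only [hP, Finset.mem_insert, Finset.mem_singleton] at hx hy
    rcases hx with h | h <;> rcases hy with h' | h' <;> rw [h, h']
    · exact ⟨[c], isPathOf_single σ hc, rfl, rfl⟩
    · exact ⟨[c, c'], isPathOf_pair σ hc hc' hne hs, rfl, by simp⟩
    · exact ⟨[c', c], isPathOf_pair σ hc' hc (Ne.symm hne) hs', rfl, by simp⟩
    · exact ⟨[c'], isPathOf_single σ hc', rfl, rfl⟩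
  have hloop : σ.IsPathOf P [c, c', c] := by
    refine ⟨⟨by simp, by simp [List.Chain', hs, hs'], ?_⟩, by simp [hc, hc']⟩
    intro x hx y hy hxy
    simp only [List.mem_cons, List.mem_singleton, List.not_mem_nil, or_false] at hx hy
    rcases hx with rfl | rfl | rfl <;> rcases hy with rfl | rfl | rfl <;>
      first | rfl | exact absurd hxy (by assumption) | exact absurd hxy.symm (by assumption)
  have h := hcons P hpat hcov [c, c', c] [c] hloop (isPathOf_single σ hc)
    rfl (by simp)
  simpa [Subst.omega] using h

lemma square_rel (σ : Subst A (ℤ × ℤ)) (hdc : σ.DominoComplete) (hcons : σ.Consistent)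
    (a b c d : A) :
    (σ.ruleVec (((0, 0) : ℤ × ℤ), a) (((1, 0) : ℤ × ℤ), b)).getD 0 +
      (σ.ruleVec (((1, 0) : ℤ × ℤ), b) (((1, 1) : ℤ × ℤ), d)).getD 0 =
    (σ.ruleVec (((0, 0) : ℤ × ℤ), a) (((0, 1) : ℤ × ℤ), c)).getD 0 +
      (σ.ruleVec (((0, 1) : ℤ × ℤ), c) (((1, 1) : ℤ × ℤ), d)).getD 0 := by
  classical
  set c00 : (ℤ × ℤ) × A := (((0, 0) : ℤ × ℤ), a) with hc00
  set c10 : (ℤ × ℤ) × A := (((1, 0) : ℤ × ℤ), b) with hc10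
  set c01 : (ℤ × ℤ) × A := (((0, 1) : ℤ × ℤ), c) with hc01
  set c11 : (ℤ × ℤ) × A := (((1, 1) : ℤ × ℤ), d) with hc11
  have e1 : σ.ruleVec c10 c11 = σ.ruleVec (0, b) ((0, 1), d) := by
    rw [hc10, hc11, ruleVec_transl, show ((1, 1) : ℤ × ℤ) - (1, 0) = (0, 1) by decide]
  have e2 : σ.ruleVec c01 c11 = σ.ruleVec (0, c) ((1, 0), d) := by
    rw [hc01, hc11, ruleVec_transl, show ((1, 1) : ℤ × ℤ) - (0, 1) = (1, 0) by decide]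
  have e3 : σ.ruleVec c00 c10 = σ.ruleVec (0, a) ((1, 0), b) := by
    rw [hc00, hc10, ruleVec_transl, show ((1, 0) : ℤ × ℤ) - (0, 0) = (1, 0) by decide]
  have e4 : σ.ruleVec c00 c01 = σ.ruleVec (0, a) ((0, 1), c) := by
    rw [hc00, hc01, ruleVec_transl, show ((0, 1) : ℤ × ℤ) - (0, 0) = (0, 1) by decide]
  have z : ((0, 0) : ℤ × ℤ) = 0 := rfl
  have hsA : (σ.ruleVec c00 c10).isSome := by rw [e3, ← z]; exact (hdc.2 a b).1
  have hsB : (σ.ruleVec c10 c11).isSome := by rw [e1, ← z]; exact (hdc.2 b d).2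
  have hsC : (σ.ruleVec c00 c01).isSome := by rw [e4, ← z]; exact (hdc.2 a c).2
  have hsD : (σ.ruleVec c01 c11).isSome := by rw [e2, ← z]; exact (hdc.2 c d).1
  have hsA' := ruleVec_isSome_symm σ _ _ hsA
  have hsB' := ruleVec_isSome_symm σ _ _ hsB
  have hsC' := ruleVec_isSome_symm σ _ _ hsC
  have hsD' := ruleVec_isSome_symm σ _ _ hsD
  have n1 : c00.1 ≠ c10.1 := by rw [hc00, hc10]; simp [Prod.ext_iff]
  have n2 : c00.1 ≠ c01.1 := by rw [hc00, hc01]; simp [Prod.ext_iff]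
  have n3 : c00.1 ≠ c11.1 := by rw [hc00, hc11]; simp [Prod.ext_iff]
  have n4 : c10.1 ≠ c01.1 := by rw [hc10, hc01]; simp [Prod.ext_iff]
  have n5 : c10.1 ≠ c11.1 := by rw [hc10, hc11]; simp [Prod.ext_iff]
  have n6 : c01.1 ≠ c11.1 := by rw [hc01, hc11]; simp [Prod.ext_iff]
  set P : Finset ((ℤ × ℤ) × A) := {c00, c10, c01, c11} with hP
  have m1 : c00 ∈ P := by simp [hP]
  have m2 : c10 ∈ P := by simp [hP]
  have m3 : c01 ∈ P := by simp [hP]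
  have m4 : c11 ∈ P := by simp [hP]
  have hpat : IsPattern P := by
    intro x hx y hy hxy
    simp only [hP, Finset.mem_insert, Finset.mem_singleton] at hx hy
    rcases hx with rfl | rfl | rfl | rfl <;> rcases hy with rfl | rfl | rfl | rfl <;>
      first | rfl | exact absurd hxy (by assumption) | exact absurd hxy.symm (by assumption)
  have hcov : σ.Covered P := by
    intro x hx y hy
    simp only [hP, Finset.mem_insert, Finset.mem_singleton] at hx hy
    rcases hx with h | h | h | h <;> rcases hy with h' | h' | h' | h' <;> rw [h, h']
    · exact ⟨[c00], isPathOf_single σ m1, rfl, rfl⟩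
    · exact ⟨[c00, c10], isPathOf_pair σ m1 m2 n1 hsA, rfl, by simp⟩
    · exact ⟨[c00, c01], isPathOf_pair σ m1 m3 n2 hsC, rfl, by simp⟩
    · exact ⟨[c00, c10, c11], isPathOf_triple σ m1 m2 m4 n1 n3 n5 hsA hsB, rfl, by simp⟩
    · exact ⟨[c10, c00], isPathOf_pair σ m2 m1 (Ne.symm n1) hsA', rfl, by simp⟩
    · exact ⟨[c10], isPathOf_single σ m2, rfl, rfl⟩
    · exact ⟨[c10, c00, c01], isPathOf_triple σ m2 m1 m3 (Ne.symm n1) n4 n2 hsA' hsC, rfl, by simp⟩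
    · exact ⟨[c10, c11], isPathOf_pair σ m2 m4 n5 hsB, rfl, by simp⟩
    · exact ⟨[c01, c00], isPathOf_pair σ m3 m1 (Ne.symm n2) hsC', rfl, by simp⟩
    · exact ⟨[c01, c00, c10], isPathOf_triple σ m3 m1 m2 (Ne.symm n2) (Ne.symm n4) n1 hsC' hsA, rfl, by simp⟩
    · exact ⟨[c01], isPathOf_single σ m3, rfl, rfl⟩
    · exact ⟨[c01, c11], isPathOf_pair σ m3 m4 n6 hsD, rfl, by simp⟩
    · exact ⟨[c11, c10, c00], isPathOf_triple σ m4 m2 m1 (Ne.symm n5) (Ne.symm n3) (Ne.symm n1) hsB' hsA', rfl, by simp⟩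
    · exact ⟨[c11, c10], isPathOf_pair σ m4 m2 (Ne.symm n5) hsB', rfl, by simp⟩
    · exact ⟨[c11, c01], isPathOf_pair σ m4 m3 (Ne.symm n6) hsD', rfl, by simp⟩
    · exact ⟨[c11], isPathOf_single σ m4, rfl, rfl⟩
  have h := hcons P hpat hcov [c00, c10, c11] [c00, c01, c11]
    (isPathOf_triple σ m1 m2 m4 n1 n3 n5 hsA hsB)
    (isPathOf_triple σ m1 m3 m4 n2 n3 n6 hsC hsD)
    rfl (by simp)
  simpa [Subst.omega] using h

lemma omega_structure (σ : Subst A (ℤ × ℤ)) (hdc : σ.DominoComplete)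
    (hcons : σ.Consistent) (α β : ℤ × ℤ) (v : A → ℤ × ℤ)
    (hH : ∀ a b : A, (σ.ruleVec ((0 : ℤ × ℤ), a) (((1, 0) : ℤ × ℤ), b)).getD 0 = α - v a + v b)
    (hV : ∀ a b : A, (σ.ruleVec ((0 : ℤ × ℤ), a) (((0, 1) : ℤ × ℤ), b)).getD 0 = β - v a + v b) :
    ∀ γ : List ((ℤ × ℤ) × A), σ.IsPath γ → ∀ (p : ℤ × ℤ) (t : A) (q : ℤ × ℤ) (t' : A),
      γ.head? = some (p, t) → γ.getLast? = some (q, t') →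
      σ.omega γ = (q.1 - p.1) • α + (q.2 - p.2) • β - v t + v t' := by
  intro γ
  induction γ with
  | nil => intro _ p t q t' hh _; simp at hh
  | cons c γ' ih =>
    cases γ' with
    | nil =>
      intro _ p t q t' hh hl
      simp only [List.head?_cons, Option.some.injEq] at hh
      simp only [List.getLast?_singleton, Option.some.injEq] at hl
      rw [hh] at hl
      injection hl with h1 h2
      subst h1; subst h2
      simp [Subst.omega]
    | cons c2 rest =>
      intro hpath p t q t' hh hl
      obtain ⟨hne0, hchain, hinj⟩ := hpath
      simp only [List.head?_cons, Option.some.injEq] at hh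
      subst hh
      obtain ⟨r, s⟩ := c2
      have hs : (σ.ruleVec (p, t) (r, s)).isSome := (List.isChain_cons_cons.mp hchain).1
      have hchain' := (List.isChain_cons_cons.mp hchain).2
      have htail : σ.IsPath ((r, s) :: rest) :=
        ⟨List.cons_ne_nil _ _, hchain',
          fun x hx y hy => hinj x (List.mem_cons_of_mem _ hx) y (List.mem_cons_of_mem _ hy)⟩
      have hlast : ((r, s) :: rest).getLast? = some (q, t') := by
        rw [← hl]; exact (List.getLast?_cons_cons).symm
      have htv := ih htail r s q t' rfl hlast
      have homega : σ.omega ((p, t) :: (r, s) :: rest) =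
          (σ.ruleVec (p, t) (r, s)).getD 0 + σ.omega ((r, s) :: rest) := by
        simp [Subst.omega]
      have hoff : r - p = ((1 : ℤ), (0 : ℤ)) ∨ r - p = (-1, 0) ∨
          r - p = (0, 1) ∨ r - p = (0, -1) := by
        rcases h1 : σ.rule t s (r - p) with _ | w
        · have h2 : σ.rule s t (p - r) ≠ none := by
            intro hn
            simp [Subst.ruleVec, h1, hn] at hs
          have h3 := hdc.1 s t (p - r) h2
          have hneg : p - r = -(r - p) := by abel
          rw [hneg] at h3
          rcases h3 with h | h | h | h
          · right; left; rw [← neg_neg (r - p), h]; decide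
          · left; rw [← neg_neg (r - p), h]; decide
          · right; right; right; rw [← neg_neg (r - p), h]; decide
          · right; right; left; rw [← neg_neg (r - p), h]; decide
        · exact hdc.1 t s (r - p) (by rw [h1]; simp)
      have hpr : p ≠ r := by
        intro e
        rw [e, sub_self] at hoff
        rcases hoff with h | h | h | h <;> exact absurd h (by decide)
      rcases hoff with h | h | h | h
      · have hstep : (σ.ruleVec (p, t) (r, s)).getD 0 = α - v t + v s := by
          rw [ruleVec_transl, h, hH]
        have e1 : r.1 - p.1 = 1 := by have := congrArg Prod.fst h; simpa using this
        have e2 : r.2 - p.2 = 0 := by have := congrArg Prod.snd h; simpa using this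
        rw [homega, hstep, htv,
          show q.1 - p.1 = (q.1 - r.1) + 1 by omega,
          show q.2 - p.2 = q.2 - r.2 by omega, add_smul, one_smul]
        abel
      · have hanti := ruleVec_antisymm σ hcons (c := (p, t)) (c' := (r, s)) hpr hs
        have hrev : (σ.ruleVec (r, s) (p, t)).getD 0 = α - v s + v t := by
          rw [ruleVec_transl, show p - r = ((1 : ℤ), (0 : ℤ)) by
            rw [show p - r = -(r - p) by abel, h]; decide, hH]
        have hstep : (σ.ruleVec (p, t) (r, s)).getD 0 = -(α - v s + v t) := by
          rw [← hrev]; exact eq_neg_of_add_eq_zero_left hanti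
        have e1 : r.1 - p.1 = -1 := by have := congrArg Prod.fst h; simpa using this
        have e2 : r.2 - p.2 = 0 := by have := congrArg Prod.snd h; simpa using this
        rw [homega, hstep, htv,
          show q.1 - p.1 = (q.1 - r.1) + -1 by omega,
          show q.2 - p.2 = q.2 - r.2 by omega, add_smul, neg_one_zsmul]
        abel
      · have hstep : (σ.ruleVec (p, t) (r, s)).getD 0 = β - v t + v s := by
          rw [ruleVec_transl, h, hV]
        have e1 : r.1 - p.1 = 0 := by have := congrArg Prod.fst h; simpa using this
        have e2 : r.2 - p.2 = 1 := by have := congrArg Prod.snd h; simpa using this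
        rw [homega, hstep, htv,
          show q.1 - p.1 = q.1 - r.1 by omega,
          show q.2 - p.2 = (q.2 - r.2) + 1 by omega, add_smul, one_smul]
        abel
      · have hanti := ruleVec_antisymm σ hcons (c := (p, t)) (c' := (r, s)) hpr hs
        have hrev : (σ.ruleVec (r, s) (p, t)).getD 0 = β - v s + v t := by
          rw [ruleVec_transl, show p - r = ((0 : ℤ), (1 : ℤ)) by
            rw [show p - r = -(r - p) by abel, h]; decide, hV]
        have hstep : (σ.ruleVec (p, t) (r, s)).getD 0 = -(β - v s + v t) := by
          rw [← hrev]; exact eq_neg_of_add_eq_zero_left hanti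
        have e1 : r.1 - p.1 = 0 := by have := congrArg Prod.fst h; simpa using this
        have e2 : r.2 - p.2 = -1 := by have := congrArg Prod.snd h; simpa using this
        rw [homega, hstep, htv,
          show q.1 - p.1 = q.1 - r.1 by omega,
          show q.2 - p.2 = (q.2 - r.2) + -1 by omega, add_smul, neg_one_zsmul]
        abel

end AuxLemmas

/-- Proposition `structcdc`.  For a consistent
two-dimensional domino-complete substitution `σ` there are vectors
`α, β ∈ ℤ²` and a vector `v t ∈ ℤ²` for every letter `t`, such that every
`C_σ`-path from a cell `[(0,0), t]` to a cell `[(x,y), t']` has image vector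
`x•α + y•β - v t + v t'`. -/
theorem structure_of_consistent_dominoComplete {A : Type*} [Fintype A]
    (σ : Subst A (ℤ × ℤ)) (hdc : σ.DominoComplete) (hcons : σ.Consistent) :
    ∃ (α β : ℤ × ℤ) (v : A → ℤ × ℤ),
      ∀ (t t' : A) (x y : ℤ) (γ : List ((ℤ × ℤ) × A)),
        σ.IsPath γ → γ.head? = some ((((0 : ℤ), (0 : ℤ)) : ℤ × ℤ), t) →
        γ.getLast? = some ((((x, y) : ℤ × ℤ)), t') →
        σ.omega γ = x • α + y • β - v t + v t' := by
  cases isEmpty_or_nonempty A with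
  | inl hA =>
    exact ⟨0, 0, fun _ => 0, fun t => isEmptyElim t⟩
  | inr hA =>
    obtain ⟨t0⟩ := hA
    set α : ℤ × ℤ := (σ.ruleVec ((0 : ℤ × ℤ), t0) (((1, 0) : ℤ × ℤ), t0)).getD 0 with hα
    set β : ℤ × ℤ := (σ.ruleVec ((0 : ℤ × ℤ), t0) (((0, 1) : ℤ × ℤ), t0)).getD 0 with hβ
    set v : A → ℤ × ℤ := fun a => -(σ.ruleVec ((0 : ℤ × ℤ), a) (((0, 1) : ℤ × ℤ), t0)).getD 0 with hv
    have z : ((0, 0) : ℤ × ℤ) = 0 := rfl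
    have key : ∀ a b c d : A,
        (σ.ruleVec ((0 : ℤ × ℤ), a) (((1, 0) : ℤ × ℤ), b)).getD 0 +
          (σ.ruleVec ((0 : ℤ × ℤ), b) (((0, 1) : ℤ × ℤ), d)).getD 0 =
        (σ.ruleVec ((0 : ℤ × ℤ), a) (((0, 1) : ℤ × ℤ), c)).getD 0 +
          (σ.ruleVec ((0 : ℤ × ℤ), c) (((1, 0) : ℤ × ℤ), d)).getD 0 := by
      intro a b c d
      have h := square_rel σ hdc hcons a b c d
      rw [show σ.ruleVec (((1, 0) : ℤ × ℤ), b) (((1, 1) : ℤ × ℤ), d) =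
            σ.ruleVec ((0 : ℤ × ℤ), b) (((0, 1) : ℤ × ℤ), d) by
          rw [ruleVec_transl, show ((1, 1) : ℤ × ℤ) - (1, 0) = (0, 1) by decide],
        show σ.ruleVec (((0, 1) : ℤ × ℤ), c) (((1, 1) : ℤ × ℤ), d) =
            σ.ruleVec ((0 : ℤ × ℤ), c) (((1, 0) : ℤ × ℤ), d) by
          rw [ruleVec_transl, show ((1, 1) : ℤ × ℤ) - (0, 1) = (1, 0) by decide],
        z] at h
      exact h
    have hH : ∀ a b : A,
        (σ.ruleVec ((0 : ℤ × ℤ), a) (((1, 0) : ℤ × ℤ), b)).getD 0 = α - v a + v b := by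
      intro a b
      have h := key a b t0 t0
      rw [← hα] at h
      have h2 := eq_sub_of_add_eq h
      rw [h2]
      simp only [hv]
      abel
    have hV : ∀ a b : A,
        (σ.ruleVec ((0 : ℤ × ℤ), a) (((0, 1) : ℤ × ℤ), b)).getD 0 = β - v a + v b := by
      intro a b
      have h := key t0 a t0 b
      rw [hH t0 a, hH t0 b, ← hβ] at h
      have h2 := eq_sub_of_add_eq' h
      rw [h2]
      abel
    refine ⟨α, β, v, ?_⟩
    intro t t' x y γ hγ hh hl
    have := omega_structure σ hdc hcons α β v hH hV γ hγ ((0 : ℤ), (0 : ℤ)) t (x, y) t' hh hl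
    simpa using this
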